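/- Let γ = [[a,b],[c,d]] ∈ SL₂(ℂ)\SU₂(ℂ) with |a|²+|c|² ≠ 1. Then the bisector Σ_γ in ℍ³ of the geodesic segment from j to γ⁻¹(j) is a Euclidean hemisphere with center P_γ = −(āb+c̄d)/(|a|²+|c|²−1) ∈ ∂ℍ³ = ℂ and radius R_γ given by R_γ² = (1+‖P_γ‖²)/(|a|²+|c|²); equivalently, j and γ⁻¹(j) are inverse points with respect to the sphere of center P_γ and radius R_γ. -/

import Mathlib

open Matrix

/-- `‖γ‖²`, the sum of the squared moduli of the entries of `γ`. -/
noncomputable def mnorm (γ : Matrix (Fin 2) (Fin 2) ℂ) : ℝ :=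
  Complex.normSq (γ 0 0) + Complex.normSq (γ 0 1) + Complex.normSq (γ 1 0) + Complex.normSq (γ 1 1)

/-- `δ(P,P') = cosh ρ(P,P') = 1 + d(P,P')²/(2rr')` for points `P = z+rj`, `P' = z'+r'j` of `ℍ³`,
`d` being the Euclidean distance. -/
noncomputable def δH (z : ℂ) (r : ℝ) (z' : ℂ) (r' : ℝ) : ℝ :=
  1 + (Complex.normSq (z - z') + (r - r') ^ 2) / (2 * r * r')

lemma bisector_aux (w : ℂ) (t : ℝ) (ht : 0 < t) (ht1 : t ≠ 1) (z : ℂ) (r : ℝ) (hr : 0 < r) :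
    δH 0 1 z r = δH (w / (t:ℂ)) t⁻¹ z r ↔
      Complex.normSq (z - w / ((t-1:ℝ):ℂ)) + r^2 =
        (1 + Complex.normSq (w / ((t-1:ℝ):ℂ)))/t := by
  have ht0 : (t:ℝ) ≠ 0 := ne_of_gt ht
  have ht1' : t - 1 ≠ 0 := sub_ne_zero.mpr ht1
  have hr0 : r ≠ 0 := ne_of_gt hr
  have hA : (2*r*t^3 : ℝ) ≠ 0 := by positivity
  have hB : ((t-1)^3 : ℝ) ≠ 0 := pow_ne_zero _ ht1'
  simp only [δH, Complex.normSq_apply, Complex.sub_re, Complex.sub_im,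
    Complex.div_ofReal_re, Complex.div_ofReal_im, Complex.zero_re, Complex.zero_im]
  constructor <;> intro h <;> field_simp at h ⊢
  · refine mul_left_cancel₀ hA ?_
    linear_combination (2*r*t^3*(1-t)) * h
  · refine mul_left_cancel₀ hB ?_
    linear_combination (-(t-1)^2) * h

lemma inverse_aux (w : ℂ) (t : ℝ) (ht : 0 < t) (ht1 : t ≠ 1) :
    Real.sqrt (Complex.normSq (0 - w/((t-1:ℝ):ℂ)) + 1^2) *
      Real.sqrt (Complex.normSq (w/(t:ℂ) - w/((t-1:ℝ):ℂ)) + (t⁻¹)^2) =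
      (1 + Complex.normSq (w/((t-1:ℝ):ℂ)))/t := by
  have ht0 : (t:ℝ) ≠ 0 := ne_of_gt ht
  have ht1' : t - 1 ≠ 0 := sub_ne_zero.mpr ht1
  set X : ℝ := 1 + Complex.normSq (w/((t-1:ℝ):ℂ)) with hX
  have hX0 : 0 ≤ X := add_nonneg zero_le_one (Complex.normSq_nonneg _)
  have e1 : Complex.normSq (0 - w/((t-1:ℝ):ℂ)) + 1^2 = X := by
    rw [zero_sub, Complex.normSq_neg, one_pow, add_comm, hX]
  have e2 : Complex.normSq (w/(t:ℂ) - w/((t-1:ℝ):ℂ)) + (t⁻¹)^2 = X / t^2 := by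
    rw [hX]
    simp only [Complex.normSq_apply, Complex.sub_re, Complex.sub_im,
      Complex.div_ofReal_re, Complex.div_ofReal_im]
    field_simp
    ring
  rw [e1, e2, ← Real.sqrt_mul hX0]
  rw [show X * (X / t^2) = (X/t)^2 by field_simp]
  rw [Real.sqrt_sq (div_nonneg hX0 ht.le)]

/-- For `γ = [[a,b],[c,d]] ∈ SL₂(ℂ)\SU₂(ℂ)` with `|a|²+|c|² ≠ 1`, the bisector `Σ_γ` in `ℍ³`
of the geodesic segment from `j` to `γ⁻¹(j) = −(āb+c̄d)/(|a|²+|c|²) + (1/(|a|²+|c|²))j`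
is the Euclidean hemisphere with center `P_γ = −(āb+c̄d)/(|a|²+|c|²−1) ∈ ℂ` and radius `R_γ`
with `R_γ² = (1+‖P_γ‖²)/(|a|²+|c|²)`; equivalently, `j` and `γ⁻¹(j)` are inverse points with
respect to the sphere of center `P_γ` and radius `R_γ`. -/
theorem stmt11 (a b c d : ℂ) (hdet : a * d - b * c = 1)
    (hsu : mnorm !![a, b; c, d] ≠ 2)
    (h1 : Complex.normSq a + Complex.normSq c ≠ 1) :
    (∀ (z : ℂ) (r : ℝ), 0 < r →
      (δH 0 1 z r =
        δH (-((starRingEnd ℂ) a * b + (starRingEnd ℂ) c * d) /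
              ((Complex.normSq a + Complex.normSq c : ℝ) : ℂ))
           ((Complex.normSq a + Complex.normSq c)⁻¹) z r ↔
        Complex.normSq
            (z - -((starRingEnd ℂ) a * b + (starRingEnd ℂ) c * d) /
              ((Complex.normSq a + Complex.normSq c - 1 : ℝ) : ℂ)) + r ^ 2 =
          (1 + Complex.normSq (-((starRingEnd ℂ) a * b + (starRingEnd ℂ) c * d) /
              ((Complex.normSq a + Complex.normSq c - 1 : ℝ) : ℂ))) /
            (Complex.normSq a + Complex.normSq c))) ∧
    Real.sqrt (Complex.normSq
        (0 - -((starRingEnd ℂ) a * b + (starRingEnd ℂ) c * d) /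
          ((Complex.normSq a + Complex.normSq c - 1 : ℝ) : ℂ)) + 1 ^ 2) *
      Real.sqrt (Complex.normSq
        (-((starRingEnd ℂ) a * b + (starRingEnd ℂ) c * d) /
            ((Complex.normSq a + Complex.normSq c : ℝ) : ℂ) -
          -((starRingEnd ℂ) a * b + (starRingEnd ℂ) c * d) /
            ((Complex.normSq a + Complex.normSq c - 1 : ℝ) : ℂ)) +
        ((Complex.normSq a + Complex.normSq c)⁻¹) ^ 2) =
      (1 + Complex.normSq (-((starRingEnd ℂ) a * b + (starRingEnd ℂ) c * d) /
          ((Complex.normSq a + Complex.normSq c - 1 : ℝ) : ℂ))) /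
        (Complex.normSq a + Complex.normSq c) := by
  have ht : 0 < Complex.normSq a + Complex.normSq c := by
    rcases (add_nonneg (Complex.normSq_nonneg a) (Complex.normSq_nonneg c)).lt_or_eq with h | h
    · exact h
    · exfalso
      have ha : a = 0 := by
        have := Complex.normSq_nonneg a
        have := Complex.normSq_nonneg c
        exact Complex.normSq_eq_zero.mp (by linarith)
      have hc : c = 0 := by
        have := Complex.normSq_nonneg a
        have := Complex.normSq_nonneg c
        exact Complex.normSq_eq_zero.mp (by linarith)
      rw [ha, hc] at hdet
      simp at hdet
  exact ⟨fun z r hr => bisector_aux _ _ ht h1 z r hr, inverse_aux _ _ ht h1⟩
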